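/- Let ν > -1 and let g_ν be the entire function g_ν(z) = 2^ν·Γ(ν+1)·z^{1-ν}·J_ν(z) = Σ_{n≥0} (-1)^n·Γ(ν+1)/(4^n·n!·Γ(n+ν+1)) · z^{2n+1}, where J_ν is the Bessel function of the first kind. Then the radius of convexity r^c(g_ν) satisfies the upper bounds r^c(g_ν) < 6√((ν+1)(ν+2)/(56ν+137)), r^c(g_ν) < √(2(56ν+137)(ν+1)(ν+3)/(208ν²+1172ν+1693)), and r^c(g_ν) < 2√(2(ν+1)(ν+2)(ν+4)(208ν²+1172ν+1693)/(3104ν⁴+36768ν³+161424ν²+312197ν+223803)). -/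

import Mathlib

set_option maxHeartbeats 1000000

noncomputable def besselG (ν : ℝ) (z : ℂ) : ℂ :=
  ∑' n : ℕ, (((-1 : ℝ) ^ n * Real.Gamma (ν + 1) /
      (4 ^ n * n.factorial * Real.Gamma (n + ν + 1)) : ℝ) : ℂ) * z ^ (2 * n + 1)

noncomputable def radiusOfConvexity (f : ℂ → ℂ) : ℝ :=
  sSup {r : ℝ | 0 < r ∧ ∀ z : ℂ, ‖z‖ < r →
    0 < (1 + z * deriv (deriv f) z / deriv f z).re}

noncomputable def aa (ν : ℝ) : ℕ → ℝ
  | 0 => 1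
  | n+1 => aa ν n / (4*(n+1)*((n:ℝ)+ν+1))

lemma aa_zero (ν : ℝ) : aa ν 0 = 1 := rfl

lemma aa_succ (ν : ℝ) (n : ℕ) : aa ν (n+1) = aa ν n / (4*(n+1)*((n:ℝ)+ν+1)) := rfl

lemma aa_pos {ν : ℝ} (hν : -1 < ν) (n : ℕ) : 0 < aa ν n := by
  induction n with
  | zero => norm_num [aa]
  | succ n ih =>
    rw [aa_succ]
    have hn : (0:ℝ) ≤ (n:ℝ) := n.cast_nonneg
    exact div_pos ih (by nlinarith)

lemma coeff_eq' {ν : ℝ} (hν : -1 < ν) (n : ℕ) :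
    Real.Gamma (ν + 1) / (4 ^ n * n.factorial * Real.Gamma (n + ν + 1)) = aa ν n := by
  induction n with
  | zero =>
    have h : Real.Gamma (ν + 1) ≠ 0 := (Real.Gamma_pos_of_pos (by linarith)).ne'
    simp [aa, div_self h]
  | succ n ih =>
    have hn : (0:ℝ) ≤ (n:ℝ) := n.cast_nonneg
    have hpos : (0:ℝ) < (n:ℝ) + ν + 1 := by linarith
    have hG : Real.Gamma ((n:ℝ) + ν + 1) ≠ 0 := (Real.Gamma_pos_of_pos hpos).ne'
    have hstep : Real.Gamma ((↑(n+1):ℝ) + ν + 1) = ((n:ℝ)+ν+1) * Real.Gamma ((n:ℝ)+ν+1) := by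
      push_cast
      rw [show (n:ℝ) + 1 + ν + 1 = ((n:ℝ) + ν + 1) + 1 by ring, Real.Gamma_add_one hpos.ne']
    rw [aa_succ, ← ih, hstep, div_div]
    congr 1
    push_cast [Nat.factorial_succ, pow_succ]
    ring

lemma coeff_eq {ν : ℝ} (hν : -1 < ν) (n : ℕ) :
    ((-1 : ℝ) ^ n * Real.Gamma (ν + 1) /
      (4 ^ n * n.factorial * Real.Gamma (n + ν + 1))) = (-1)^n * aa ν n := by
  rw [mul_div_assoc, coeff_eq' hν n]

/- ### Alternating series bounds -/

lemma alt_summable {t : ℕ → ℝ} (ht : Summable t) (h0 : ∀ n, 0 ≤ t n) :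
    Summable (fun n => (-1:ℝ)^n * t n) := by
  apply Summable.of_norm_bounded ht
  intro n
  rw [norm_mul, norm_pow, norm_neg, norm_one, one_pow, one_mul, Real.norm_eq_abs,
    abs_of_nonneg (h0 n)]

lemma alt_nonneg {t : ℕ → ℝ} (ht : Summable t) (h0 : ∀ n, 0 ≤ t n)
    (hd : ∀ n, t (n+1) ≤ t n) : 0 ≤ ∑' n, (-1:ℝ)^n * t n := by
  have hinj2 : Function.Injective (fun k : ℕ => 2*k) := fun a b h => by
    simp only [] at h; omega
  have hinj2' : Function.Injective (fun k : ℕ => 2*k+1) := fun a b h => by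
    simp only [] at h; omega
  have hte : Summable (fun k : ℕ => t (2*k)) := ht.comp_injective hinj2
  have hto : Summable (fun k : ℕ => t (2*k+1)) := ht.comp_injective hinj2'
  have he : Summable (fun k : ℕ => (-1:ℝ)^(2*k) * t (2*k)) := by
    have h1 : (fun k : ℕ => (-1:ℝ)^(2*k) * t (2*k)) = (fun k : ℕ => t (2*k)) := by
      funext k; rw [pow_mul]; norm_num
    rw [h1]; exact hte
  have ho : Summable (fun k : ℕ => (-1:ℝ)^(2*k+1) * t (2*k+1)) := by
    have h1 : (fun k : ℕ => (-1:ℝ)^(2*k+1) * t (2*k+1)) = (fun k : ℕ => -t (2*k+1)) := by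
      funext k; rw [pow_succ, pow_mul]; norm_num
    rw [h1]; exact hto.neg
  rw [← tsum_even_add_odd he ho]
  have e1 : ∑' k : ℕ, (-1:ℝ)^(2*k) * t (2*k) = ∑' k : ℕ, t (2*k) :=
    tsum_congr fun k => by rw [pow_mul]; norm_num
  have e2 : ∑' k : ℕ, (-1:ℝ)^(2*k+1) * t (2*k+1) = -∑' k : ℕ, t (2*k+1) := by
    rw [← tsum_neg]; exact tsum_congr fun k => by rw [pow_succ, pow_mul]; norm_num
  rw [e1, e2]
  have hA : 0 ≤ ∑' k : ℕ, (t (2*k) - t (2*k+1)) :=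
    tsum_nonneg fun k => by have := hd (2*k); linarith
  have hB : ∑' k : ℕ, (t (2*k) - t (2*k+1)) = (∑' k : ℕ, t (2*k)) - ∑' k : ℕ, t (2*k+1) :=
    Summable.tsum_sub hte hto
  linarith

lemma alt_le_first {t : ℕ → ℝ} (ht : Summable t) (h0 : ∀ n, 0 ≤ t n)
    (hd : ∀ n, t (n+1) ≤ t n) : ∑' n, (-1:ℝ)^n * t n ≤ t 0 := by
  have hsum : Summable (fun n => (-1:ℝ)^n * t n) := alt_summable ht h0
  rw [Summable.tsum_eq_zero_add hsum]
  have h1 : ∑' n, (-1:ℝ)^(n+1) * t (n+1) = -∑' n, (-1:ℝ)^n * t (n+1) := by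
    rw [← tsum_neg]
    congr 1; funext n; rw [pow_succ]; ring
  rw [h1]
  have h2 : 0 ≤ ∑' n, (-1:ℝ)^n * t (n+1) :=
    alt_nonneg ((summable_nat_add_iff 1).2 ht) (fun n => h0 (n+1)) (fun n => hd (n+1))
  simp only [pow_zero, one_mul]
  linarith

/- ### Summability -/

lemma summable_cube {ν : ℝ} (hν : -1 < ν) {c : ℝ} (hc : 0 ≤ c) :
    Summable (fun n : ℕ => aa ν n * (2*(n:ℝ)+1)^3 * c^n) := by
  apply summable_of_ratio_norm_eventually_le (r := 1/2) (by norm_num)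
  filter_upwards [Filter.eventually_ge_atTop (⌈(14:ℝ)*(c+1)⌉₊)] with n hn
  have hn' : (14:ℝ)*(c+1) ≤ (n:ℝ) := le_trans (Nat.le_ceil _) (by exact_mod_cast hn)
  have hn0 : (0:ℝ) ≤ (n:ℝ) := n.cast_nonneg
  have h1 : (0:ℝ) < (n:ℝ)+ν+1 := by linarith
  have hapos := aa_pos hν n
  have hterm1 : (0:ℝ) ≤ aa ν (n+1) * (2*((n:ℝ)+1)+1)^3 * c^(n+1) := by
    have := aa_pos hν (n+1)
    positivity
  have hterm0 : (0:ℝ) ≤ aa ν n * (2*(n:ℝ)+1)^3 * c^n := by positivity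
  rw [Real.norm_eq_abs, Real.norm_eq_abs]
  push_cast
  rw [abs_of_nonneg (by push_cast at hterm1 ⊢; exact hterm1), abs_of_nonneg hterm0]
  rw [aa_succ]
  have hkey : (2*(n:ℝ)+3)^3 * c ≤ 1/2 * (2*(n:ℝ)+1)^3 * (4*((n:ℝ)+1)*((n:ℝ)+ν+1)) := by
    have e1 : (2*(n:ℝ)+3) ≤ 3*(2*(n:ℝ)+1) := by linarith
    have e2 : (2*(n:ℝ)+3)^3 ≤ 27*(2*(n:ℝ)+1)^3 := by
      have := pow_le_pow_left₀ (by linarith : (0:ℝ) ≤ 2*(n:ℝ)+3) e1 3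
      calc (2*(n:ℝ)+3)^3 ≤ (3*(2*(n:ℝ)+1))^3 := this
        _ = 27*(2*(n:ℝ)+1)^3 := by ring
    have e3 : 27*c ≤ 2*((n:ℝ)+1)*((n:ℝ)+ν+1) := by nlinarith
    nlinarith [pow_pos (by linarith : (0:ℝ) < 2*(n:ℝ)+1) 3, mul_le_mul_of_nonneg_right e2 hc]
  have hden : (0:ℝ) < 4*((n:ℝ)+1)*((n:ℝ)+ν+1) := by nlinarith
  rw [div_mul_eq_mul_div, div_mul_eq_mul_div, div_le_iff₀ hden]
  have hc' : (0:ℝ) ≤ aa ν n * c^n := mul_nonneg hapos.le (pow_nonneg hc n)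
  calc aa ν n * (2*((n:ℝ)+1)+1)^3 * c^(n+1)
      = (aa ν n * c^n) * ((2*(n:ℝ)+3)^3 * c) := by rw [pow_succ]; ring
    _ ≤ (aa ν n * c^n) * (1/2 * (2*(n:ℝ)+1)^3 * (4*((n:ℝ)+1)*((n:ℝ)+ν+1))) :=
        mul_le_mul_of_nonneg_left hkey hc'
    _ = 1/2 * (aa ν n * (2*(n:ℝ)+1)^3 * c^n) * (4*((n:ℝ)+1)*((n:ℝ)+ν+1)) := by ring

lemma summable_pow {ν : ℝ} (hν : -1 < ν) {c : ℝ} (hc : 0 ≤ c) {j : ℕ} (hj : j ≤ 3) :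
    Summable (fun n : ℕ => aa ν n * (2*(n:ℝ)+1)^j * c^n) := by
  apply Summable.of_nonneg_of_le _ _ (summable_cube hν hc)
  · intro n
    have := aa_pos hν n
    positivity
  · intro n
    have h1 : (1:ℝ) ≤ 2*(n:ℝ)+1 := by linarith [(Nat.cast_nonneg n : (0:ℝ) ≤ n)]
    have h2 : (2*(n:ℝ)+1)^j ≤ (2*(n:ℝ)+1)^3 := pow_le_pow_right₀ h1 hj
    have := aa_pos hν n
    have hcn : (0:ℝ) ≤ c^n := pow_nonneg hc n
    nlinarith [mul_le_mul_of_nonneg_left h2 this.le]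

/- ### Derivatives -/

noncomputable def besselF1 (ν : ℝ) (z : ℂ) : ℂ :=
  ∑' n : ℕ, (((-1:ℝ)^n * aa ν n * (2*(n:ℝ)+1) : ℝ) : ℂ) * z^(2*n)

noncomputable def besselF2 (ν : ℝ) (z : ℂ) : ℂ :=
  ∑' n : ℕ, (((-1:ℝ)^n * aa ν n * (2*(n:ℝ)+1) * (2*(n:ℝ)) : ℝ) : ℂ) * z^(2*n-1)

lemma besselG_eq {ν : ℝ} (hν : -1 < ν) :
    besselG ν = fun z => ∑' n : ℕ, (((-1:ℝ)^n * aa ν n : ℝ) : ℂ) * z^(2*n+1) := by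
  funext z
  exact tsum_congr fun n => by rw [coeff_eq hν n]

lemma norm_coeff {ν : ℝ} (hν : -1 < ν) (n : ℕ) (x : ℝ) :
    ‖(((-1:ℝ)^n * aa ν n * x : ℝ) : ℂ)‖ = aa ν n * |x| := by
  rw [Complex.norm_real, Real.norm_eq_abs, abs_mul, abs_mul, abs_pow, abs_neg, abs_one,
    one_pow, one_mul, abs_of_nonneg (aa_pos hν n).le]

lemma hasDerivAt_besselG {ν : ℝ} (hν : -1 < ν) {r : ℝ} (hr : 1 ≤ r) {z : ℂ}
    (hz : z ∈ Metric.ball (0:ℂ) r) :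
    HasDerivAt (besselG ν) (besselF1 ν z) z := by
  rw [besselG_eq hν]
  exact hasDerivAt_tsum_of_isPreconnected
    (u := fun n => aa ν n * (2*(n:ℝ)+1)^3 * (r^2)^n)
    (summable_cube hν (by positivity))
    Metric.isOpen_ball (convex_ball _ _).isPreconnected
    (g' := fun n y => (((-1:ℝ)^n * aa ν n * (2*(n:ℝ)+1) : ℝ) : ℂ) * y^(2*n))
    (fun n y _ => by
      have h := (hasDerivAt_pow (2*n+1) y).const_mul ((((-1:ℝ)^n * aa ν n : ℝ) : ℂ))
      have e : (((-1:ℝ)^n * aa ν n * (2*(n:ℝ)+1) : ℝ) : ℂ) * y^(2*n)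
          = (((-1:ℝ)^n * aa ν n : ℝ) : ℂ) * (((2*n+1 : ℕ) : ℂ) * y^(2*n+1-1)) := by
        have : 2*n+1-1 = 2*n := by omega
        rw [this]
        push_cast
        ring
      rw [e]
      exact h)
    (fun n y hy => by
      rw [norm_mul, norm_coeff hν, norm_pow, ← pow_mul r 2 n]
      have hy' : ‖y‖ ≤ r := by
        rw [Metric.mem_ball, dist_zero_right] at hy; linarith
      have h1 : ‖y‖^(2*n) ≤ r^(2*n) := pow_le_pow_left₀ (norm_nonneg y) hy' _
      have hn0 : (0:ℝ) ≤ (n:ℝ) := Nat.cast_nonneg n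
      have h2 : (1:ℝ) ≤ 2*(n:ℝ)+1 := by linarith
      have h3 : (2*(n:ℝ)+1) ≤ (2*(n:ℝ)+1)^3 := by
        nlinarith [mul_nonneg (mul_nonneg hn0 hn0) hn0, sq_nonneg (n:ℝ)]
      have ha := aa_pos hν n
      have habs : |2*(n:ℝ)+1| = 2*(n:ℝ)+1 := abs_of_nonneg (by linarith)
      rw [habs]
      have hnn : (0:ℝ) ≤ ‖y‖^(2*n) := by positivity
      have hr2n : (0:ℝ) ≤ r^(2*n) := by positivity
      calc aa ν n * (2*(n:ℝ)+1) * ‖y‖^(2*n)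
          ≤ aa ν n * (2*(n:ℝ)+1) * r^(2*n) :=
            mul_le_mul_of_nonneg_left h1 (mul_nonneg ha.le (by linarith))
        _ ≤ aa ν n * (2*(n:ℝ)+1)^3 * r^(2*n) :=
            mul_le_mul_of_nonneg_right (mul_le_mul_of_nonneg_left h3 ha.le) hr2n)
    (Metric.mem_ball_self (by linarith))
    (by
      apply Summable.of_norm
      have : (fun n : ℕ => ‖(((-1:ℝ)^n * aa ν n : ℝ) : ℂ) * (0:ℂ)^(2*n+1)‖) = fun n => 0 := by
        funext n; simp [zero_pow]
      rw [this]
      exact summable_zero)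
    hz

lemma hasDerivAt_besselF1 {ν : ℝ} (hν : -1 < ν) {r : ℝ} (hr : 1 ≤ r) {z : ℂ}
    (hz : z ∈ Metric.ball (0:ℂ) r) :
    HasDerivAt (besselF1 ν) (besselF2 ν z) z := by
  have h0r : (0:ℝ) < r := lt_of_lt_of_le one_pos hr
  exact hasDerivAt_tsum_of_isPreconnected
    (u := fun n => aa ν n * (2*(n:ℝ)+1)^3 * (r^2)^n)
    (summable_cube hν (by positivity))
    Metric.isOpen_ball (convex_ball _ _).isPreconnected
    (g' := fun n y => (((-1:ℝ)^n * aa ν n * (2*(n:ℝ)+1) * (2*(n:ℝ)) : ℝ) : ℂ) * y^(2*n-1))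
    (fun n y _ => by
      match n with
      | 0 =>
        have e0 : (((-1:ℝ)^0 * aa ν 0 * (2*((0:ℕ):ℝ)+1) * (2*((0:ℕ):ℝ)) : ℝ) : ℂ) * y^(2*0-1) = 0 := by
          norm_num
        rw [e0]
        have e1 : (fun z : ℂ => (((-1:ℝ)^0 * aa ν 0 * (2*((0:ℕ):ℝ)+1) : ℝ) : ℂ) * z^(2*0))
            = fun _ : ℂ => (((-1:ℝ)^0 * aa ν 0 * (2*((0:ℕ):ℝ)+1) : ℝ) : ℂ) := by
          funext w; norm_num
        rw [e1]
        exact hasDerivAt_const y _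
      | (m+1) =>
        have h := (hasDerivAt_pow (2*(m+1)) y).const_mul
          ((((-1:ℝ)^(m+1) * aa ν (m+1) * (2*((m+1:ℕ):ℝ)+1) : ℝ) : ℂ))
        have e : (((-1:ℝ)^(m+1) * aa ν (m+1) * (2*((m+1:ℕ):ℝ)+1) * (2*((m+1:ℕ):ℝ)) : ℝ) : ℂ) * y^(2*(m+1)-1)
            = (((-1:ℝ)^(m+1) * aa ν (m+1) * (2*((m+1:ℕ):ℝ)+1) : ℝ) : ℂ)
              * (((2*(m+1) : ℕ) : ℂ) * y^(2*(m+1)-1)) := by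
          push_cast
          ring
        rw [e]
        exact h)
    (fun n y hy => by
      have hy' : ‖y‖ ≤ r := by
        rw [Metric.mem_ball, dist_zero_right] at hy; linarith
      have h1 : ‖y‖^(2*n-1) ≤ r^(2*n-1) := pow_le_pow_left₀ (norm_nonneg y) hy' _
      have h2 : r^(2*n-1) ≤ r^(2*n) := pow_le_pow_right₀ hr (by omega)
      have ha := aa_pos hν n
      have hn0 : (0:ℝ) ≤ (n:ℝ) := n.cast_nonneg
      have h3 : (2*(n:ℝ)+1) * (2*(n:ℝ)) ≤ (2*(n:ℝ)+1)^3 := by nlinarith [mul_nonneg hn0 hn0, mul_nonneg (mul_nonneg hn0 hn0) hn0]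
      have hnormc : ‖(((-1:ℝ)^n * aa ν n * (2*(n:ℝ)+1) * (2*(n:ℝ)) : ℝ) : ℂ)‖
          = aa ν n * ((2*(n:ℝ)+1) * (2*(n:ℝ))) := by
        rw [Complex.norm_real, Real.norm_eq_abs, abs_mul, abs_mul, abs_mul, abs_pow, abs_neg,
          abs_one, one_pow, one_mul, abs_of_nonneg (aa_pos hν n).le,
          abs_of_nonneg (by linarith : (0:ℝ) ≤ 2*(n:ℝ)+1),
          abs_of_nonneg (by positivity : (0:ℝ) ≤ 2*(n:ℝ))]
        ring
      rw [norm_mul, hnormc, norm_pow, ← pow_mul r 2 n]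
      have hnn : (0:ℝ) ≤ ‖y‖^(2*n-1) := by positivity
      have hr2n : (0:ℝ) ≤ r^(2*n) := by positivity
      calc aa ν n * ((2*(n:ℝ)+1) * (2*(n:ℝ))) * ‖y‖^(2*n-1)
          ≤ aa ν n * ((2*(n:ℝ)+1) * (2*(n:ℝ))) * r^(2*n) :=
            mul_le_mul_of_nonneg_left (le_trans h1 h2) (mul_nonneg ha.le (by positivity))
        _ ≤ aa ν n * (2*(n:ℝ)+1)^3 * r^(2*n) :=
            mul_le_mul_of_nonneg_right (mul_le_mul_of_nonneg_left h3 ha.le) hr2n)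
    (Metric.mem_ball_self h0r)
    (by
      apply summable_of_ne_finset_zero (s := {0})
      intro n hn
      have hn' : n ≠ 0 := by simpa using hn
      have : (0:ℂ)^(2*n) = 0 := by
        apply zero_pow; omega
      simp [this])
    hz

set_option maxHeartbeats 1600000 in
lemma certAux (u : ℝ) (hu : 0 < u) :
    ∃ t : ℝ, 0 < t ∧
      (1 - 9/(4*u)*t + 25/(32*u*(u+1))*t^2 - 49/(384*u*(u+1)*(u+2))*t^3
        + 81/(6144*u*(u+1)*(u+2)*(u+3))*t^4 < 0) ∧
      (0 < 1 - 3/(4*u)*t + 5/(32*u*(u+1))*t^2 - 7/(384*u*(u+1)*(u+2))*t^3) ∧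
      t ≤ 16*(u+4) ∧
      t < 36*(u*(u+1))/(56*u+81) ∧
      t < 2*(56*u+81)*u*(u+2)/(208*u^2+756*u+729) ∧
      t < 8*u*(u+1)*(u+3)*(208*u^2+756*u+729)/(3104*u^4+24352*u^3+69744*u^2+87237*u+39366) := by
  have h1 : (0:ℝ) < u + 1 := by linarith
  have h2 : (0:ℝ) < u + 2 := by linarith
  have h3 : (0:ℝ) < u + 3 := by linarith
  have h1' : (0:ℝ) < 1 + u := by linarith
  have hQ : (0:ℝ) < 3104*u^4+24352*u^3+69744*u^2+87237*u+39366 := by positivity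
  have hD : (0:ℝ) < (3104*u^4+24352*u^3+69744*u^2+87237*u+39366)*(5000*(1+u)^3) := by positivity
  have hN : (0:ℝ) < 8*u*(u+1)*(u+3)*(208*u^2+756*u+729)*(5000 + 15000*u + 15000*u^2 + 4999*u^3) := by positivity
  set t : ℝ := (8*u*(u+1)*(u+3)*(208*u^2+756*u+729)*(5000 + 15000*u + 15000*u^2 + 4999*u^3))/((3104*u^4+24352*u^3+69744*u^2+87237*u+39366)*(5000*(1+u)^3)) with hTdef
  have ht0 : 0 < t := div_pos hN hD
  have hT : t * ((3104*u^4+24352*u^3+69744*u^2+87237*u+39366)*(5000*(1+u)^3)) = (8*u*(u+1)*(u+3)*(208*u^2+756*u+729)*(5000 + 15000*u + 15000*u^2 + 4999*u^3)) := div_mul_cancel₀ _ hD.ne'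
  refine ⟨t, ht0, ?_, ?_, ?_, ?_, ?_, ?_⟩
  · have hE : (0:ℝ) < 63031041768009595686912000000000000*u^4 + 1240052663763111242428416000000000000*u^5 + 11672755398770574674939904000000000000*u^6 + 69981877340686770249010176000000000000*u^7 + 300102541632982654317994106880000000000*u^8 + 980022680155020427219914765926400000000*u^9 + 2533548316841057362529753588736000000000*u^10 + 5321369504726683663345649682739200000000*u^11 + 9247566172540862859792148754460426240000*u^12 + 13472092459415212786777714781088522240000*u^13 + 16610402108798708195403694999677419520000*u^14 + 17451441525776038799101715128849735680000*u^15 + 15697737858737442196911945885394731659264*u^16 + 12124913388155095895650691001387458363392*u^17 + 8053048000242565550633538886176024379392*u^18 + 4598895403124869272088945824822797467648*u^19 + 2254773092792872615521316945136397099008*u^20 + 946224952106144707618069156826643038208*u^21 + 338286141865454471541435680715752554496*u^22 + 102347100955360711217821340569433276416*u^23 + 25967273656084166577837380833169829888*u^24 + 5458232365704960260122289701741330432*u^25 + 935104913558505098725906089617260544*u^26 + 127702064251885213748165825091600384*u^27 + 13475930940106473130204350248910848*u^28 + 1049981610506600527779048661712896*u^29 + 56232802603045757794878549393408*u^30 +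 1821883184993286907781894373376*u^31 + 26456809461738467239242235904*u^32 := by positivity
    have hG : (0:ℝ) < 6144*(u*(u+1)*(u+2)*(u+3)) := by positivity
    have split : 1 - 9/(4*u)*t + 25/(32*u*(u+1))*t^2 - 49/(384*u*(u+1)*(u+2))*t^3
        + 81/(6144*u*(u+1)*(u+2)*(u+3))*t^4
        = (6144*(u*(u+1)*(u+2)*(u+3)) - 13824*((u+1)*(u+2)*(u+3))*t + 4800*((u+2)*(u+3))*t^2
          - 784*(u+3)*t^3 + 81*t^4) / (6144*(u*(u+1)*(u+2)*(u+3))) := by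
      field_simp
      ring
    have key : (6144*(u*(u+1)*(u+2)*(u+3)) - 13824*((u+1)*(u+2)*(u+3))*t + 4800*((u+2)*(u+3))*t^2
          - 784*(u+3)*t^3 + 81*t^4) * ((3104*u^4+24352*u^3+69744*u^2+87237*u+39366)*(5000*(1+u)^3))^4 = -(63031041768009595686912000000000000*u^4 + 1240052663763111242428416000000000000*u^5 + 11672755398770574674939904000000000000*u^6 + 69981877340686770249010176000000000000*u^7 + 300102541632982654317994106880000000000*u^8 + 980022680155020427219914765926400000000*u^9 + 2533548316841057362529753588736000000000*u^10 + 5321369504726683663345649682739200000000*u^11 + 9247566172540862859792148754460426240000*u^12 + 13472092459415212786777714781088522240000*u^13 + 16610402108798708195403694999677419520000*u^14 + 17451441525776038799101715128849735680000*u^15 + 15697737858737442196911945885394731659264*u^16 + 12124913388155095895650691001387458363392*u^17 + 8053048000242565550633538886176024379392*u^18 + 4598895403124869272088945824822797467648*u^19 + 2254773092792872615521316945136397099008*u^20 + 946224952106144707618069156826643038208*u^21 + 338286141865454471541435680715752554496*u^22 + 102347100955360711217821340569433276416*u^23 + 25967273656084166577837380833169829888*u^24 + 5458232365704960260122289701741330432*u^25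 + 935104913558505098725906089617260544*u^26 + 127702064251885213748165825091600384*u^27 + 13475930940106473130204350248910848*u^28 + 1049981610506600527779048661712896*u^29 + 56232802603045757794878549393408*u^30 + 1821883184993286907781894373376*u^31 + 26456809461738467239242235904*u^32) := by
      calc (6144*(u*(u+1)*(u+2)*(u+3)) - 13824*((u+1)*(u+2)*(u+3))*t + 4800*((u+2)*(u+3))*t^2
          - 784*(u+3)*t^3 + 81*t^4) * ((3104*u^4+24352*u^3+69744*u^2+87237*u+39366)*(5000*(1+u)^3))^4
          = 6144*(u*(u+1)*(u+2)*(u+3))*((3104*u^4+24352*u^3+69744*u^2+87237*u+39366)*(5000*(1+u)^3))^4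
            - 13824*((u+1)*(u+2)*(u+3))*(t*((3104*u^4+24352*u^3+69744*u^2+87237*u+39366)*(5000*(1+u)^3)))*((3104*u^4+24352*u^3+69744*u^2+87237*u+39366)*(5000*(1+u)^3))^3
            + 4800*((u+2)*(u+3))*(t*((3104*u^4+24352*u^3+69744*u^2+87237*u+39366)*(5000*(1+u)^3)))^2*((3104*u^4+24352*u^3+69744*u^2+87237*u+39366)*(5000*(1+u)^3))^2
            - 784*(u+3)*(t*((3104*u^4+24352*u^3+69744*u^2+87237*u+39366)*(5000*(1+u)^3)))^3*((3104*u^4+24352*u^3+69744*u^2+87237*u+39366)*(5000*(1+u)^3)) + 81*(t*((3104*u^4+24352*u^3+69744*u^2+87237*u+39366)*(5000*(1+u)^3)))^4 := by ring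
        _ = -(63031041768009595686912000000000000*u^4 + 1240052663763111242428416000000000000*u^5 + 11672755398770574674939904000000000000*u^6 + 69981877340686770249010176000000000000*u^7 + 300102541632982654317994106880000000000*u^8 + 980022680155020427219914765926400000000*u^9 + 2533548316841057362529753588736000000000*u^10 + 5321369504726683663345649682739200000000*u^11 + 9247566172540862859792148754460426240000*u^12 + 13472092459415212786777714781088522240000*u^13 + 16610402108798708195403694999677419520000*u^14 + 17451441525776038799101715128849735680000*u^15 + 15697737858737442196911945885394731659264*u^16 + 12124913388155095895650691001387458363392*u^17 + 8053048000242565550633538886176024379392*u^18 + 4598895403124869272088945824822797467648*u^19 + 2254773092792872615521316945136397099008*u^20 + 946224952106144707618069156826643038208*u^21 + 338286141865454471541435680715752554496*u^22 + 102347100955360711217821340569433276416*u^23 + 25967273656084166577837380833169829888*u^24 + 5458232365704960260122289701741330432*u^25 + 935104913558505098725906089617260544*u^26 + 127702064251885213748165825091600384*u^27 + 13475930940106473130204350248910848*u^28 + 1049981610506600527779048661712896*u^29 + 56232802603045757794878549393408*u^30 + 1821883184993286907781894373376*u^31 + 26456809461738467239242235904*u^32) := by rw [hT]; ring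
    have hinner : (6144*(u*(u+1)*(u+2)*(u+3)) - 13824*((u+1)*(u+2)*(u+3))*t + 4800*((u+2)*(u+3))*t^2
          - 784*(u+3)*t^3 + 81*t^4) < 0 := by
      have h4 : (0:ℝ) < ((3104*u^4+24352*u^3+69744*u^2+87237*u+39366)*(5000*(1+u)^3))^4 := pow_pos hD 4
      nlinarith [key, hE, h4]
    rw [split]
    exact div_neg_of_neg_of_pos hinner hG
  · have hE : (0:ℝ) < 3904305912313344000000000000*u + 66831112931141376000000000000*u^2 + 544052919046187520000000000000*u^3 + 2802365379843357055334400000000*u^4 + 10250654727402333708134400000000*u^5 + 28328365627936609752345600000000*u^6 + 61435560554554112290425600000000*u^7 + 107202036926538382628933913600000*u^8 + 153104730841014761309783569920000*u^9 + 181087128323911829983949594880000*u^10 + 178786681740044061348226801920000*u^11 + 148064972670761185515406934999552*u^12 + 103096949722227039857979658094592*u^13 + 60352780991839132184387905835520*u^14 + 29632093486780470797633063174144*u^15 + 12141694422876062433166012208640*u^16 + 4118767293870559834579377887232*u^17 + 1143042692791304620586354953728*u^18 + 255085488190223753711781464064*u^19 + 44638347349242930951816069120*u^20 + 5896020992990949356986335232*u^21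 + 552381697619497492968898560*u^22 + 32697307757222897360830464*u^23 + 918866943958173098180608*u^24 := by positivity
    have hG : (0:ℝ) < 384*(u*(u+1)*(u+2)) := by positivity
    have split : 1 - 3/(4*u)*t + 5/(32*u*(u+1))*t^2 - 7/(384*u*(u+1)*(u+2))*t^3
        = (384*(u*(u+1)*(u+2)) - 288*((u+1)*(u+2))*t + 60*(u+2)*t^2 - 7*t^3)
          / (384*(u*(u+1)*(u+2))) := by
      field_simp
      ring
    have key : (384*(u*(u+1)*(u+2)) - 288*((u+1)*(u+2))*t + 60*(u+2)*t^2 - 7*t^3) * ((3104*u^4+24352*u^3+69744*u^2+87237*u+39366)*(5000*(1+u)^3))^3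
        = (3904305912313344000000000000*u + 66831112931141376000000000000*u^2 + 544052919046187520000000000000*u^3 + 2802365379843357055334400000000*u^4 + 10250654727402333708134400000000*u^5 + 28328365627936609752345600000000*u^6 + 61435560554554112290425600000000*u^7 + 107202036926538382628933913600000*u^8 + 153104730841014761309783569920000*u^9 + 181087128323911829983949594880000*u^10 + 178786681740044061348226801920000*u^11 + 148064972670761185515406934999552*u^12 + 103096949722227039857979658094592*u^13 + 60352780991839132184387905835520*u^14 + 29632093486780470797633063174144*u^15 + 12141694422876062433166012208640*u^16 + 4118767293870559834579377887232*u^17 + 1143042692791304620586354953728*u^18 + 255085488190223753711781464064*u^19 + 44638347349242930951816069120*u^20 + 5896020992990949356986335232*u^21 + 552381697619497492968898560*u^22 + 32697307757222897360830464*u^23 + 918866943958173098180608*u^24) := by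
      calc (384*(u*(u+1)*(u+2)) - 288*((u+1)*(u+2))*t + 60*(u+2)*t^2 - 7*t^3) * ((3104*u^4+24352*u^3+69744*u^2+87237*u+39366)*(5000*(1+u)^3))^3
          = 384*(u*(u+1)*(u+2))*((3104*u^4+24352*u^3+69744*u^2+87237*u+39366)*(5000*(1+u)^3))^3 - 288*((u+1)*(u+2))*(t*((3104*u^4+24352*u^3+69744*u^2+87237*u+39366)*(5000*(1+u)^3)))*((3104*u^4+24352*u^3+69744*u^2+87237*u+39366)*(5000*(1+u)^3))^2
            + 60*(u+2)*(t*((3104*u^4+24352*u^3+69744*u^2+87237*u+39366)*(5000*(1+u)^3)))^2*((3104*u^4+24352*u^3+69744*u^2+87237*u+39366)*(5000*(1+u)^3)) - 7*(t*((3104*u^4+24352*u^3+69744*u^2+87237*u+39366)*(5000*(1+u)^3)))^3 := by ring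
        _ = (3904305912313344000000000000*u + 66831112931141376000000000000*u^2 + 544052919046187520000000000000*u^3 + 2802365379843357055334400000000*u^4 + 10250654727402333708134400000000*u^5 + 28328365627936609752345600000000*u^6 + 61435560554554112290425600000000*u^7 + 107202036926538382628933913600000*u^8 + 153104730841014761309783569920000*u^9 + 181087128323911829983949594880000*u^10 + 178786681740044061348226801920000*u^11 + 148064972670761185515406934999552*u^12 + 103096949722227039857979658094592*u^13 + 60352780991839132184387905835520*u^14 + 29632093486780470797633063174144*u^15 + 12141694422876062433166012208640*u^16 + 4118767293870559834579377887232*u^17 + 1143042692791304620586354953728*u^18 + 255085488190223753711781464064*u^19 + 44638347349242930951816069120*u^20 + 5896020992990949356986335232*u^21 + 552381697619497492968898560*u^22 + 32697307757222897360830464*u^23 + 918866943958173098180608*u^24) := by rw [hT]; ring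
    have hinner : 0 < 384*(u*(u+1)*(u+2)) - 288*((u+1)*(u+2))*t + 60*(u+2)*t^2 - 7*t^3 := by
      have h4 : (0:ℝ) < ((3104*u^4+24352*u^3+69744*u^2+87237*u+39366)*(5000*(1+u)^3))^3 := pow_pos hD 3
      nlinarith [key, hE, h4]
    rw [split]
    exact div_pos hinner hG
  · rw [hTdef, div_le_iff₀ hD]
    have hdiff : 16*(u+4)*(((3104*u^4+24352*u^3+69744*u^2+87237*u+39366)*(5000*(1+u)^3))) - (8*u*(u+1)*(u+3)*(208*u^2+756*u+729)*(5000 + 15000*u + 15000*u^2 + 4999*u^3)) = 12597120000 + 68769000000*u + 159813960000*u^2 + 205996160000*u^3 + 160715857496*u^4 + 77554721472*u^5 + 22550875016*u^6 + 3597932704*u^7 + 240001664*u^8 := by ring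
    nlinarith [hdiff, pow_pos hu 1, pow_pos hu 2, pow_pos hu 3, pow_pos hu 4, pow_pos hu 5, pow_pos hu 6, pow_pos hu 7, pow_pos hu 8]
  · rw [hTdef, div_lt_div_iff₀ hD (by positivity : (0:ℝ) < 56*u+81)]
    have hdiff : 36*(u*(u+1))*(((3104*u^4+24352*u^3+69744*u^2+87237*u+39366)*(5000*(1+u)^3))) - (8*u*(u+1)*(u+3)*(208*u^2+756*u+729)*(5000 + 15000*u + 15000*u^2 + 4999*u^3))*(56*u+81) = 1093500000*u^2 + 5743440000*u^3 + 12658417176*u^4 + 15160739008*u^5 + 10657058728*u^6 + 4402189920*u^7 + 990286208*u^8 + 92893184*u^9 := by ring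
    nlinarith [hdiff, pow_pos hu 2, pow_pos hu 3, pow_pos hu 4, pow_pos hu 5, pow_pos hu 6, pow_pos hu 7, pow_pos hu 8, pow_pos hu 9]
  · rw [hTdef, div_lt_div_iff₀ hD (by positivity : (0:ℝ) < 208*u^2+756*u+729)]
    have hdiff : 2*(56*u+81)*u*(u+2)*(((3104*u^4+24352*u^3+69744*u^2+87237*u+39366)*(5000*(1+u)^3))) - (8*u*(u+1)*(u+3)*(208*u^2+756*u+729)*(5000 + 15000*u + 15000*u^2 + 4999*u^3))*(208*u^2+756*u+729) = 804330000*u^3 + 3537184584*u^4 + 6372210064*u^5 + 6069248664*u^6 + 3285079488*u^7 + 999860608*u^8 + 152700416*u^9 + 8026112*u^10 := by ring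
    nlinarith [hdiff, pow_pos hu 3, pow_pos hu 4, pow_pos hu 5, pow_pos hu 6, pow_pos hu 7, pow_pos hu 8, pow_pos hu 9, pow_pos hu 10]
  · rw [hTdef, div_lt_div_iff₀ hD hQ]
    have hP' : (0:ℝ) < 8*u*(u+1)*(u+3)*(208*u^2+756*u+729) := by positivity
    have hdiff : 8*u*(u+1)*(u+3)*(208*u^2+756*u+729)*((3104*u^4+24352*u^3+69744*u^2+87237*u+39366)*(5000*(1+u)^3))
        - (8*u*(u+1)*(u+3)*(208*u^2+756*u+729)*(5000 + 15000*u + 15000*u^2 + 4999*u^3))*(3104*u^4+24352*u^3+69744*u^2+87237*u+39366)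
        = (8*u*(u+1)*(u+3)*(208*u^2+756*u+729))*(3104*u^4+24352*u^3+69744*u^2+87237*u+39366)*u^3 := by
      ring
    nlinarith [hdiff, mul_pos (mul_pos hP' hQ) (pow_pos hu 3)]


theorem stmt10 (ν : ℝ) (hν : -1 < ν) :
    radiusOfConvexity (besselG ν) < 6 * Real.sqrt ((ν + 1) * (ν + 2) / (56 * ν + 137)) ∧
    radiusOfConvexity (besselG ν) <
      Real.sqrt (2 * (56 * ν + 137) * (ν + 1) * (ν + 3) /
        (208 * ν ^ 2 + 1172 * ν + 1693)) ∧
    radiusOfConvexity (besselG ν) <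
      2 * Real.sqrt (2 * (ν + 1) * (ν + 2) * (ν + 4) * (208 * ν ^ 2 + 1172 * ν + 1693) /
        (3104 * ν ^ 4 + 36768 * ν ^ 3 + 161424 * ν ^ 2 + 312197 * ν + 223803)) := by
  obtain ⟨t0, ht0pos, hq4, hq3, h16, hb1, hb2, hb3⟩ := certAux (ν+1) (by linarith)
  have hν1 : (0:ℝ) < ν + 1 := by linarith
  have hν2 : (0:ℝ) < ν + 2 := by linarith
  have hν3 : (0:ℝ) < ν + 3 := by linarith
  set x0 : ℝ := Real.sqrt t0 with hx0def
  have hx0pos : 0 < x0 := Real.sqrt_pos.2 ht0pos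
  have hx0sq : x0^2 = t0 := Real.sq_sqrt ht0pos.le
  have hr : (1:ℝ) ≤ x0 + 1 := by linarith
  have hx0ball : ((x0:ℝ):ℂ) ∈ Metric.ball (0:ℂ) (x0+1) := by
    rw [Metric.mem_ball, dist_zero_right, Complex.norm_real, Real.norm_eq_abs,
      abs_of_nonneg hx0pos.le]
    linarith
  -- sequences
  set tψ : ℕ → ℝ := fun n => aa ν n * (2*(n:ℝ)+1) * t0^n with htψ
  set tφ : ℕ → ℝ := fun n => aa ν n * (2*(n:ℝ)+1)^2 * t0^n with htφ
  set tχ : ℕ → ℝ := fun n => aa ν n * ((2*(n:ℝ)+1) * (2*(n:ℝ))) * t0^n with htχ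
  have htψ0 : ∀ n, 0 ≤ tψ n := fun n => by
    have := aa_pos hν n
    have : (0:ℝ) ≤ (n:ℝ) := n.cast_nonneg
    simp only [htψ]
    have := aa_pos hν n
    positivity
  have htφ0 : ∀ n, 0 ≤ tφ n := fun n => by
    have := aa_pos hν n
    simp only [htφ]
    positivity
  have htχ0 : ∀ n, 0 ≤ tχ n := fun n => by
    have h1 := aa_pos hν n
    have h2 : (0:ℝ) ≤ (n:ℝ) := n.cast_nonneg
    simp only [htχ]
    have h3 : (0:ℝ) ≤ (2*(n:ℝ)+1) * (2*(n:ℝ)) := by positivity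
    positivity
  have hSψ : Summable tψ := by
    have h := summable_pow hν ht0pos.le (show 1 ≤ 3 by norm_num)
    apply Summable.of_nonneg_of_le htψ0 _ h
    intro n
    simp only [htψ, pow_one]
    exact le_rfl
  have hSφ : Summable tφ := by
    have h := summable_pow hν ht0pos.le (show 2 ≤ 3 by norm_num)
    apply Summable.of_nonneg_of_le htφ0 _ h
    intro n
    simp only [htφ]
    exact le_rfl
  have hSχ : Summable tχ := by
    apply Summable.of_nonneg_of_le htχ0 _ (summable_cube hν ht0pos.le)
    intro n
    have ha := aa_pos hν n
    have hn0 : (0:ℝ) ≤ (n:ℝ) := n.cast_nonneg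
    have h3 : (2*(n:ℝ)+1) * (2*(n:ℝ)) ≤ (2*(n:ℝ)+1)^3 := by
      nlinarith [mul_nonneg hn0 hn0, mul_nonneg (mul_nonneg hn0 hn0) hn0]
    simp only [htχ]
    have ht0n : (0:ℝ) ≤ t0^n := pow_nonneg ht0pos.le n
    exact mul_le_mul_of_nonneg_right (mul_le_mul_of_nonneg_left h3 ha.le) ht0n
  -- aa values
  have hne1 : (ν:ℝ) + 1 ≠ 0 := hν1.ne'
  have hne2 : (ν:ℝ) + 2 ≠ 0 := hν2.ne'
  have hne3 : (ν:ℝ) + 3 ≠ 0 := hν3.ne'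
  have ea1 : aa ν 1 = 1/(4*(ν+1)) := by norm_num [aa]
  have ea2 : aa ν 2 = 1/(32*((ν+1)*(ν+2))) := by
    have h2 : aa ν 2 = aa ν 1 / (4*((1:ℕ)+1)*(((1:ℕ):ℝ)+ν+1)) := aa_succ ν 1
    rw [h2, ea1, div_div]
    congr 1
    push_cast
    ring
  have ea3 : aa ν 3 = 1/(384*((ν+1)*(ν+2)*(ν+3))) := by
    have h3 : aa ν 3 = aa ν 2 / (4*((2:ℕ)+1)*(((2:ℕ):ℝ)+ν+1)) := aa_succ ν 2
    rw [h3, ea2, div_div]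
    congr 1
    push_cast
    ring
  have ea4 : aa ν 4 = 1/(6144*((ν+1)*(ν+2)*(ν+3)*(ν+4))) := by
    have h4 : aa ν 4 = aa ν 3 / (4*((3:ℕ)+1)*(((3:ℕ):ℝ)+ν+1)) := aa_succ ν 3
    rw [h4, ea3, div_div]
    congr 1
    push_cast
    ring
  -- antitone of tails
  have hdecψ : ∀ m : ℕ, 4 ≤ m → tψ (m+1) ≤ tψ m := by
    intro m hm
    have hm' : (4:ℝ) ≤ (m:ℝ) := by exact_mod_cast hm
    have hden : (0:ℝ) < 4*((m:ℝ)+1)*((m:ℝ)+ν+1) := by nlinarith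
    have ha := aa_pos hν m
    have hkey : t0*(2*(m:ℝ)+3) ≤ (2*(m:ℝ)+1)*(4*((m:ℝ)+1)*((m:ℝ)+ν+1)) := by
      have h16' : t0 ≤ 16*(ν+5) := by linarith [h16]
      nlinarith [h16', hm', hν, mul_nonneg (by linarith : (0:ℝ) ≤ (m:ℝ)-4) (by linarith : (0:ℝ) ≤ ν+5), mul_nonneg (by linarith : (0:ℝ) ≤ (m:ℝ)-4) (by linarith : (0:ℝ) ≤ (m:ℝ))]
    simp only [htψ, aa_succ]
    rw [div_mul_eq_mul_div, div_mul_eq_mul_div, div_le_iff₀ hden]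
    push_cast
    rw [pow_succ t0 m]
    have hc : (0:ℝ) ≤ aa ν m * t0^m := mul_nonneg ha.le (pow_nonneg ht0pos.le m)
    nlinarith [mul_le_mul_of_nonneg_left hkey hc, pow_nonneg ht0pos.le m]
  have hdecφ : ∀ m : ℕ, 5 ≤ m → tφ (m+1) ≤ tφ m := by
    intro m hm
    have hm' : (5:ℝ) ≤ (m:ℝ) := by exact_mod_cast hm
    have hden : (0:ℝ) < 4*((m:ℝ)+1)*((m:ℝ)+ν+1) := by nlinarith
    have ha := aa_pos hν m
    have hkey : t0*(2*(m:ℝ)+3)^2 ≤ (2*(m:ℝ)+1)^2*(4*((m:ℝ)+1)*((m:ℝ)+ν+1)) := by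
      have h16' : t0 ≤ 16*(ν+5) := by linarith [h16]
      nlinarith [h16', hm', hν, ht0pos,
        mul_nonneg (by linarith : (0:ℝ) ≤ (m:ℝ)-5) (by linarith : (0:ℝ) ≤ ν+5),
        mul_nonneg (by linarith : (0:ℝ) ≤ (m:ℝ)-5) (by linarith : (0:ℝ) ≤ (m:ℝ)),
        mul_nonneg (mul_nonneg (by linarith : (0:ℝ) ≤ (m:ℝ)-5) (by linarith : (0:ℝ) ≤ (m:ℝ))) (by linarith : (0:ℝ) ≤ ν+5),
        mul_nonneg (mul_nonneg (by linarith : (0:ℝ) ≤ (m:ℝ)) (by linarith : (0:ℝ) ≤ (m:ℝ))) (by linarith : (0:ℝ) ≤ ν+5)]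
    simp only [htφ, aa_succ]
    rw [div_mul_eq_mul_div, div_mul_eq_mul_div, div_le_iff₀ hden]
    push_cast
    rw [pow_succ t0 m]
    have hc : (0:ℝ) ≤ aa ν m * t0^m := mul_nonneg ha.le (pow_nonneg ht0pos.le m)
    nlinarith [mul_le_mul_of_nonneg_left hkey hc, pow_nonneg ht0pos.le m]
  -- the two sums
  have hsψ : Summable (fun n => (-1:ℝ)^n * tψ n) := alt_summable hSψ htψ0
  have hsφ : Summable (fun n => (-1:ℝ)^n * tφ n) := alt_summable hSφ htφ0
  have hsχ : Summable (fun n => (-1:ℝ)^n * tχ n) := alt_summable hSχ htχ0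
  have hψpos : 0 < ∑' n, (-1:ℝ)^n * tψ n := by
    rw [← Summable.sum_add_tsum_nat_add 4 hsψ]
    have htail : 0 ≤ ∑' i : ℕ, (-1:ℝ)^(i+4) * tψ (i+4) := by
      have e : ∀ i : ℕ, (-1:ℝ)^(i+4) * tψ (i+4) = (-1:ℝ)^i * tψ (i+4) := by
        intro i; rw [pow_add]; norm_num
      rw [tsum_congr e]
      exact alt_nonneg ((summable_nat_add_iff 4).2 hSψ) (fun i => htψ0 (i+4))
        (fun i => hdecψ (i+4) (by omega))
    have hfin : ∑ n ∈ Finset.range 4, (-1:ℝ)^n * tψ n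
        = 1 - 3/(4*(ν+1))*t0 + 5/(32*(ν+1)*((ν+1)+1))*t0^2
          - 7/(384*(ν+1)*((ν+1)+1)*((ν+1)+2))*t0^3 := by
      rw [Finset.sum_range_succ, Finset.sum_range_succ, Finset.sum_range_succ,
        Finset.sum_range_one]
      simp only [htψ, aa_zero, ea1, ea2, ea3]
      push_cast
      field_simp
      ring
    rw [hfin]
    linarith [hq3, htail]
  have hφneg : ∑' n, (-1:ℝ)^n * tφ n < 0 := by
    rw [← Summable.sum_add_tsum_nat_add 5 hsφ]
    have htail : ∑' i : ℕ, (-1:ℝ)^(i+5) * tφ (i+5) ≤ 0 := by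
      have e : ∀ i : ℕ, (-1:ℝ)^(i+5) * tφ (i+5) = -((-1:ℝ)^i * tφ (i+5)) := by
        intro i; rw [pow_add]; norm_num
      rw [tsum_congr e, tsum_neg]
      have : 0 ≤ ∑' i : ℕ, (-1:ℝ)^i * tφ (i+5) :=
        alt_nonneg ((summable_nat_add_iff 5).2 hSφ) (fun i => htφ0 (i+5))
          (fun i => hdecφ (i+5) (by omega))
      linarith
    have hfin : ∑ n ∈ Finset.range 5, (-1:ℝ)^n * tφ n
        = 1 - 9/(4*(ν+1))*t0 + 25/(32*(ν+1)*((ν+1)+1))*t0^2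
          - 49/(384*(ν+1)*((ν+1)+1)*((ν+1)+2))*t0^3
          + 81/(6144*(ν+1)*((ν+1)+1)*((ν+1)+2)*((ν+1)+3))*t0^4 := by
      rw [Finset.sum_range_succ, Finset.sum_range_succ, Finset.sum_range_succ,
        Finset.sum_range_succ, Finset.sum_range_one]
      simp only [htφ, aa_zero, ea1, ea2, ea3, ea4]
      push_cast
      have hne4 : (ν:ℝ) + 4 ≠ 0 := by linarith
      field_simp
      ring
    rw [hfin]
    linarith [hq4, htail]
  -- derivatives at x0
  have hd1 : deriv (besselG ν) ((x0:ℝ):ℂ) = besselF1 ν ((x0:ℝ):ℂ) :=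
    (hasDerivAt_besselG hν hr hx0ball).deriv
  have hd2 : deriv (deriv (besselG ν)) ((x0:ℝ):ℂ) = besselF2 ν ((x0:ℝ):ℂ) := by
    have hEq : deriv (besselG ν) =ᶠ[nhds ((x0:ℝ):ℂ)] besselF1 ν := by
      filter_upwards [Metric.isOpen_ball.mem_nhds hx0ball] with y hy
      exact (hasDerivAt_besselG hν hr hy).deriv
    rw [hEq.deriv_eq]
    exact (hasDerivAt_besselF1 hν hr hx0ball).deriv
  -- values
  have hF1 : besselF1 ν ((x0:ℝ):ℂ) = ((∑' n, (-1:ℝ)^n * tψ n : ℝ) : ℂ) := by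
    rw [besselF1, Complex.ofReal_tsum]
    apply tsum_congr
    intro n
    rw [← Complex.ofReal_pow, ← Complex.ofReal_mul]
    congr 1
    simp only [htψ]
    rw [pow_mul, hx0sq]
    ring
  have hF2 : besselF2 ν ((x0:ℝ):ℂ)
      = ((∑' n : ℕ, ((-1:ℝ)^n * aa ν n * (2*(n:ℝ)+1) * (2*(n:ℝ)) * x0^(2*n-1)) : ℝ) : ℂ) := by
    rw [besselF2, Complex.ofReal_tsum]
    apply tsum_congr
    intro n
    rw [← Complex.ofReal_pow, ← Complex.ofReal_mul]
  have hx0d2 : x0 * (∑' n : ℕ, ((-1:ℝ)^n * aa ν n * (2*(n:ℝ)+1) * (2*(n:ℝ)) * x0^(2*n-1)))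
      = ∑' n, (-1:ℝ)^n * tχ n := by
    rw [← tsum_mul_left]
    apply tsum_congr
    intro n
    match n with
    | 0 => simp [htχ]
    | (m+1) =>
      have e2 : 2*(m+1)-1 = 2*m+1 := by omega
      have e : x0 * x0^(2*m+1) = t0^(m+1) := by
        rw [show x0 * x0^(2*m+1) = x0^(2*m+2) from (pow_succ' x0 (2*m+1)).symm,
          show 2*m+2 = 2*(m+1) from by omega, pow_mul, hx0sq]
      simp only [htχ, e2]
      rw [← e]
      push_cast
      ring
  have hrel : (∑' n, (-1:ℝ)^n * tψ n) + (∑' n, (-1:ℝ)^n * tχ n) = ∑' n, (-1:ℝ)^n * tφ n := by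
    rw [← Summable.tsum_add hsψ hsχ]
    apply tsum_congr
    intro n
    simp only [htψ, htχ, htφ]
    ring
  -- the failure point
  set ψv : ℝ := ∑' n, (-1:ℝ)^n * tψ n with hψv
  set χv : ℝ := ∑' n : ℕ, ((-1:ℝ)^n * aa ν n * (2*(n:ℝ)+1) * (2*(n:ℝ)) * x0^(2*n-1)) with hχv
  have hfail : ¬ (0 < ((1:ℂ) + ((x0:ℝ):ℂ) * deriv (deriv (besselG ν)) ((x0:ℝ):ℂ)
      / deriv (besselG ν) ((x0:ℝ):ℂ)).re) := by
    rw [hd1, hd2, hF1, hF2]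
    have hψne : ψv ≠ 0 := hψpos.ne'
    have ecast : ((1:ℂ) + ((x0:ℝ):ℂ) * ((χv:ℝ):ℂ) / ((ψv:ℝ):ℂ))
        = (((1 + x0 * χv / ψv : ℝ)):ℂ) := by push_cast; ring
    rw [ecast, Complex.ofReal_re]
    have hval : 1 + x0 * χv / ψv = (∑' n, (-1:ℝ)^n * tφ n) / ψv := by
      rw [← hrel, ← hx0d2]
      field_simp
    rw [hval]
    have := div_neg_of_neg_of_pos hφneg hψpos
    linarith
  have hsup : radiusOfConvexity (besselG ν) ≤ x0 := by
    unfold radiusOfConvexity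
    apply Real.sSup_le _ hx0pos.le
    rintro y ⟨hy0, hy⟩
    by_contra hcon
    push_neg at hcon
    refine hfail (hy ((x0:ℝ):ℂ) ?_)
    rw [Complex.norm_real, Real.norm_eq_abs, abs_of_nonneg hx0pos.le]
    linarith
  refine ⟨?_, ?_, ?_⟩
  · have h36 : t0 < 36*((ν+1)*(ν+2)/(56*ν+137)) := by
      calc t0 < 36*((ν+1)*((ν+1)+1))/(56*(ν+1)+81) := hb1
        _ = 36*((ν+1)*(ν+2)/(56*ν+137)) := by ring
    have h6 : 6*Real.sqrt ((ν+1)*(ν+2)/(56*ν+137))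
        = Real.sqrt (36*((ν+1)*(ν+2)/(56*ν+137))) := by
      rw [show (36:ℝ)*((ν+1)*(ν+2)/(56*ν+137)) = 6^2*((ν+1)*(ν+2)/(56*ν+137)) from by norm_num,
        Real.sqrt_mul (by norm_num : (0:ℝ) ≤ (6:ℝ)^2),
        Real.sqrt_sq (by norm_num : (0:ℝ) ≤ (6:ℝ))]
    have hlt : x0 < 6*Real.sqrt ((ν+1)*(ν+2)/(56*ν+137)) := by
      rw [h6, hx0def]
      exact Real.sqrt_lt_sqrt ht0pos.le h36
    exact lt_of_le_of_lt hsup hlt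
  · have harg : t0 < 2*(56*ν+137)*(ν+1)*(ν+3)/(208*ν^2+1172*ν+1693) := by
      calc t0 < 2*(56*(ν+1)+81)*(ν+1)*((ν+1)+2)/(208*(ν+1)^2+756*(ν+1)+729) := hb2
        _ = 2*(56*ν+137)*(ν+1)*(ν+3)/(208*ν^2+1172*ν+1693) := by ring
    have hlt : x0 < Real.sqrt (2*(56*ν+137)*(ν+1)*(ν+3)/(208*ν^2+1172*ν+1693)) := by
      rw [hx0def]
      exact Real.sqrt_lt_sqrt ht0pos.le harg
    exact lt_of_le_of_lt hsup hlt
  · have harg : t0 < 4*(2*(ν+1)*(ν+2)*(ν+4)*(208*ν^2+1172*ν+1693)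
        /(3104*ν^4+36768*ν^3+161424*ν^2+312197*ν+223803)) := by
      calc t0 < 8*(ν+1)*((ν+1)+1)*((ν+1)+3)*(208*(ν+1)^2+756*(ν+1)+729)
            /(3104*(ν+1)^4+24352*(ν+1)^3+69744*(ν+1)^2+87237*(ν+1)+39366) := hb3
        _ = 4*(2*(ν+1)*(ν+2)*(ν+4)*(208*ν^2+1172*ν+1693)
            /(3104*ν^4+36768*ν^3+161424*ν^2+312197*ν+223803)) := by ring
    have h2s : 2*Real.sqrt (2*(ν+1)*(ν+2)*(ν+4)*(208*ν^2+1172*ν+1693)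
        /(3104*ν^4+36768*ν^3+161424*ν^2+312197*ν+223803))
        = Real.sqrt (4*(2*(ν+1)*(ν+2)*(ν+4)*(208*ν^2+1172*ν+1693)
        /(3104*ν^4+36768*ν^3+161424*ν^2+312197*ν+223803))) := by
      rw [show (4:ℝ)*(2*(ν+1)*(ν+2)*(ν+4)*(208*ν^2+1172*ν+1693)
        /(3104*ν^4+36768*ν^3+161424*ν^2+312197*ν+223803))
        = 2^2*(2*(ν+1)*(ν+2)*(ν+4)*(208*ν^2+1172*ν+1693)
        /(3104*ν^4+36768*ν^3+161424*ν^2+312197*ν+223803)) from by norm_num,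
        Real.sqrt_mul (by norm_num : (0:ℝ) ≤ (2:ℝ)^2),
        Real.sqrt_sq (by norm_num : (0:ℝ) ≤ (2:ℝ))]
    have hlt : x0 < Real.sqrt (4*(2*(ν+1)*(ν+2)*(ν+4)*(208*ν^2+1172*ν+1693)
        /(3104*ν^4+36768*ν^3+161424*ν^2+312197*ν+223803))) := by
      rw [hx0def]
      exact Real.sqrt_lt_sqrt ht0pos.le harg
    rw [h2s]
    exact lt_of_le_of_lt hsup hlt
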